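/- With A(x) the secular ℓ-ification of P(x), λ such that det P(λ) = 0 and det Bᵢ(λ) ≠ 0 for all i: if v ∈ ℂ^m is nonzero with P(λ)v = 0, then the block vector v_A with blocks vᵢ = (∏_{j≠i} Bⱼ(λ))v is nonzero and satisfies A(λ)v_A = 0. -/

import Mathlib

open Polynomial Matrix

/-- Ordered product `B₁(x)⋯B_q(x)` of matrix polynomials. -/
noncomputable def mpProd {q m : ℕ} (f : Fin q → Matrix (Fin m) (Fin m) (Polynomial ℂ)) :
    Matrix (Fin m) (Fin m) (Polynomial ℂ) :=
  ((List.finRange q).map f).prod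

/-- Ordered product `Cᵢ(x) = ∏_{j≠i} Bⱼ(x)`. -/
noncomputable def mpProdErase {q m : ℕ} (f : Fin q → Matrix (Fin m) (Fin m) (Polynomial ℂ))
    (i : Fin q) : Matrix (Fin m) (Fin m) (Polynomial ℂ) :=
  (((List.finRange q).erase i).map f).prod

/-- The secular matrix polynomial
`A(x) = diag(B₁(x),…,B_q(x)) + (e ⊗ I_m)[W₁(x),…,W_q(x)]`. -/
noncomputable def secA {q m : ℕ} (B W : Fin q → Matrix (Fin m) (Fin m) (Polynomial ℂ)) :
    Matrix (Fin q × Fin m) (Fin q × Fin m) (Polynomial ℂ) :=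
  Matrix.of fun p₁ p₂ : Fin q × Fin m =>
    (if p₁.1 = p₂.1 then B p₁.1 p₁.2 p₂.2 else 0) + W p₂.1 p₁.2 p₂.2

/-- Unimodular matrix polynomial: the determinant is a nonzero constant. -/
noncomputable def Unimodular {k : Type*} [Fintype k] [DecidableEq k]
    (M : Matrix k k (Polynomial ℂ)) : Prop :=
  ∃ c : ℂ, c ≠ 0 ∧ M.det = Polynomial.C c

/-- The block diagonal matrix `I_{m(q-1)} ⊕ P(x)`, with `P` in the last block. -/
noncomputable def dsumIP (q m : ℕ) (P : Matrix (Fin m) (Fin m) (Polynomial ℂ)) :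
    Matrix (Fin q × Fin m) (Fin q × Fin m) (Polynomial ℂ) :=
  Matrix.of fun p₁ p₂ : Fin q × Fin m =>
    if p₁.1 = p₂.1 then
      (if (p₁.1 : ℕ) = q - 1 then P p₁.2 p₂.2
       else if p₁.2 = p₂.2 then 1 else 0)
    else 0


private lemma pairwise_of_forall' {α : Type*} {R : α → α → Prop} (h : ∀ a b, R a b) :
    ∀ l : List α, l.Pairwise R
  | [] => .nil
  | a :: l => .cons (fun b _ => h a b) (pairwise_of_forall' h l)

lemma key_prod {q m : ℕ} (B : Fin q → Matrix (Fin m) (Fin m) (Polynomial ℂ))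
    (hcomm : ∀ i j, B i * B j = B j * B i) (i : Fin q) :
    B i * mpProdErase B i = mpProd B := by
  have hperm : List.Perm ((i :: (List.finRange q).erase i).map B) ((List.finRange q).map B) :=
    ((List.perm_cons_erase (List.mem_finRange i)).symm).map B
  have hpair : List.Pairwise Commute ((i :: (List.finRange q).erase i).map B) :=
    List.pairwise_map.mpr (pairwise_of_forall' (fun a b => hcomm a b) _)
  have := hperm.prod_eq' hpair
  simpa [mpProd, mpProdErase] using this

lemma det_erase_ne {q m : ℕ} (B : Fin q → Matrix (Fin m) (Fin m) (Polynomial ℂ)) (lam : ℂ)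
    (hBlam : ∀ i, ((B i).map (Polynomial.eval lam)).det ≠ 0) (i : Fin q) :
    ((mpProdErase B i).map (Polynomial.eval lam)).det ≠ 0 := by
  have h1 : (mpProdErase B i).map (Polynomial.eval lam)
      = (((List.finRange q).erase i).map (fun j => (B j).map (Polynomial.eval lam))).prod := by
    have := map_list_prod ((Polynomial.evalRingHom lam).mapMatrix
        (m := Fin m)) (((List.finRange q).erase i).map B)
    simpa [mpProdErase, List.map_map, Function.comp_def, RingHom.mapMatrix_apply] using this
  rw [h1]
  rw [show ((((List.finRange q).erase i).map (fun j => (B j).map (Polynomial.eval lam))).prod).det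
      = ((((List.finRange q).erase i).map (fun j => (B j).map (Polynomial.eval lam))).map Matrix.det).prod
    from map_list_prod (Matrix.detMonoidHom) _]
  apply List.prod_ne_zero
  simp only [List.map_map, List.mem_map, Function.comp]
  rintro ⟨j, -, hj⟩
  exact hBlam j hj

/-- right eigenvectors of `P` give right eigenvectors of the
secular ℓ-ification: if `P(λ)v = 0` with `v ≠ 0` and all `Bᵢ(λ)` invertible,
then `v_A` with blocks `vᵢ = (∏_{j≠i} Bⱼ(λ)) v` is nonzero and
`A(λ)v_A = 0`. -/
theorem secular_right_eigenvector_converse (m q : ℕ) (hq : 0 < q)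
    (P : Matrix (Fin m) (Fin m) (Polynomial ℂ))
    (B W : Fin q → Matrix (Fin m) (Fin m) (Polynomial ℂ))
    (hreg : ∀ i, (B i).det ≠ 0)
    (hcomm : ∀ i j, B i * B j = B j * B i)
    (hcop : ∀ i j, i ≠ j → ∃ α β : Matrix (Fin m) (Fin m) (Polynomial ℂ),
      B i * α + B j * β = 1)
    (hP : P = mpProd B + ∑ i, W i * mpProdErase B i)
    (lam : ℂ)
    (hPlam : (P.map (Polynomial.eval lam)).det = 0)
    (hBlam : ∀ i, ((B i).map (Polynomial.eval lam)).det ≠ 0)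
    (v : Fin m → ℂ) (hv : v ≠ 0)
    (heig : (P.map (Polynomial.eval lam)) *ᵥ v = 0) :
    (fun p : Fin q × Fin m =>
      (((mpProdErase B p.1).map (Polynomial.eval lam)) *ᵥ v) p.2) ≠ 0 ∧
    (secA B W).map (Polynomial.eval lam) *ᵥ
      (fun p : Fin q × Fin m =>
        (((mpProdErase B p.1).map (Polynomial.eval lam)) *ᵥ v) p.2) = 0 := by
  set Bl : Fin q → Matrix (Fin m) (Fin m) ℂ := fun i => (B i).map (Polynomial.eval lam) with hBl
  set Wl : Fin q → Matrix (Fin m) (Fin m) ℂ := fun i => (W i).map (Polynomial.eval lam) with hWl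
  set Cl : Fin q → Matrix (Fin m) (Fin m) ℂ := fun i => (mpProdErase B i).map (Polynomial.eval lam) with hCl
  -- evaluated key identity
  have hkey : ∀ i : Fin q, Bl i * Cl i + ∑ j, Wl j * Cl j = P.map (Polynomial.eval lam) := by
    intro i
    have hpoly : B i * mpProdErase B i + ∑ j, W j * mpProdErase B j = P := by
      rw [hP, key_prod B hcomm i]
    have hmm : ∀ M N : Matrix (Fin m) (Fin m) (Polynomial ℂ),
        (M * N).map (Polynomial.eval lam) = M.map (Polynomial.eval lam) * N.map (Polynomial.eval lam) := by
      intro M N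
      rw [← Polynomial.coe_evalRingHom, Matrix.map_mul]
    have := congrArg ((Polynomial.evalRingHom lam).mapMatrix (m := Fin m)) hpoly
    simpa [map_add, map_sum, RingHom.mapMatrix_apply, hmm, hBl, hWl, hCl] using this
  -- evaluated vector identity
  have hvec : ∀ i : Fin q, Bl i *ᵥ (Cl i *ᵥ v) + ∑ j, Wl j *ᵥ (Cl j *ᵥ v) = 0 := by
    intro i
    have := congrArg (fun M => M *ᵥ v) (hkey i)
    have hsum : (∑ j, Wl j * Cl j) *ᵥ v = ∑ j, (Wl j * Cl j) *ᵥ v := by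
      have h := map_sum (Matrix.mulVec.addMonoidHomLeft v) (fun j => Wl j * Cl j) Finset.univ
      funext a
      have := congrFun h a
      simpa [Matrix.mulVec.addMonoidHomLeft_apply] using this
    simp only [Matrix.add_mulVec, hsum] at this
    simp only [Matrix.mulVec_mulVec]
    rw [this, heig]
  constructor
  · intro h
    set i0 : Fin q := ⟨0, hq⟩
    have h0 : Cl i0 *ᵥ v = 0 := funext fun k => congrFun h (i0, k)
    have hdet : IsUnit (Cl i0).det := isUnit_iff_ne_zero.mpr (det_erase_ne B lam hBlam i0)
    have : v = 0 := by
      have := congrArg (fun w => (Cl i0)⁻¹ *ᵥ w) h0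
      simpa [Matrix.mulVec_mulVec, Matrix.nonsing_inv_mul _ hdet] using this
    exact hv this
  · funext p
    obtain ⟨i, k⟩ := p
    have key := congrFun (hvec i) k
    simp only [Pi.add_apply, Finset.sum_apply, Matrix.mulVec, dotProduct,
      Matrix.map_apply, Pi.zero_apply, hBl, hWl, hCl] at key
    simp only [secA, Matrix.of_apply, Polynomial.eval_add, Matrix.mulVec, dotProduct,
      Matrix.map_apply, Pi.zero_apply, Fintype.sum_prod_type, add_mul,
      Finset.sum_add_distrib, apply_ite (Polynomial.eval lam), Polynomial.eval_zero,
      ite_mul, zero_mul, Finset.sum_ite_irrel, Finset.sum_const_zero, Finset.sum_ite_eq, Finset.mem_univ, if_true]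
    exact key
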